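/- Let G be a finite 2-group with a unique element of order 2. Then no subgroup H with 1 < H < G is a subgroup perfect code of G, i.e., no proper nontrivial subgroup admits an inverse-closed right transversal. -/

import Mathlib

theorem stmt_10 {G : Type*} [Group G] [Fintype G]
    (h2 : IsPGroup 2 G) (huniq : ∃! x : G, x ≠ 1 ∧ x ^ 2 = 1)
    (H : Subgroup G) (hbot : H ≠ ⊥) (htop : H ≠ ⊤) :
    ¬ ∃ T : Set G, Subgroup.IsComplement (H : Set G) T ∧ T⁻¹ = T := by
  classical
  haveI : Fact (Nat.Prime 2) := ⟨Nat.prime_two⟩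
  rintro ⟨T, hc, hTinv⟩
  obtain ⟨c, ⟨hc1, hc2⟩, hcu⟩ := huniq
  have hTinvMem : ∀ x ∈ T, x⁻¹ ∈ T := fun x hx =>
    hTinv.subset (Set.inv_mem_inv.mpr hx)
  -- T ∩ H has at most one element
  have huniqTH : ∀ t₁ t₂ : G, t₁ ∈ T → t₁ ∈ H → t₂ ∈ T → t₂ ∈ H → t₁ = t₂ := by
    intro t₁ t₂ ht₁ ht₁H ht₂ ht₂H
    have h1 := (hc.existsUnique 1).unique (y₁ := (⟨t₁⁻¹, H.inv_mem ht₁H⟩, ⟨t₁, ht₁⟩))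
      (y₂ := (⟨t₂⁻¹, H.inv_mem ht₂H⟩, ⟨t₂, ht₂⟩)) (by simp) (by simp)
    exact congrArg (fun p => (p.2 : G)) h1
  -- the element of T ∩ H
  obtain ⟨⟨h₀, t₀⟩, hpair, -⟩ := hc.existsUnique 1
  have ht₀H : (t₀ : G) ∈ H := by
    have heq : (t₀ : G) = (h₀ : G)⁻¹ := (inv_eq_of_mul_eq_one_right hpair).symm
    rw [heq]; exact H.inv_mem h₀.2
  have ht₀T : (t₀ : G) ∈ T := t₀.2
  have ht₀fix : (t₀ : G)⁻¹ = t₀ :=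
    huniqTH _ _ (hTinvMem _ ht₀T) (H.inv_mem ht₀H) ht₀T ht₀H
  -- c ∈ H
  have hcH : c ∈ H := by
    obtain ⟨⟨x, hxH⟩, hx1⟩ := Subgroup.ne_bot_iff_exists_ne_one.mp hbot
    have hx1' : x ≠ 1 := fun h => hx1 (Subtype.ext h)
    obtain ⟨k, hk⟩ := h2 x
    obtain ⟨j, hj, hordx⟩ := (Nat.dvd_prime_pow Nat.prime_two).mp
      (orderOf_dvd_of_pow_eq_one hk)
    have hj0 : j ≠ 0 := by
      rintro rfl
      exact hx1' (orderOf_eq_one_iff.mp (by simpa using hordx))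
    set y := x ^ 2 ^ (j - 1) with hy
    have hy2 : y ^ 2 = 1 := by
      rw [hy, ← pow_mul, ← pow_succ]
      have : j - 1 + 1 = j := by omega
      rw [this, ← hordx, pow_orderOf_eq_one]
    have hy1 : y ≠ 1 := by
      intro h
      have := orderOf_dvd_of_pow_eq_one h
      rw [hordx] at this
      have := Nat.le_of_dvd (Nat.pow_pos (by norm_num)) this
      have h2j : 2 ^ (j - 1) < 2 ^ j := Nat.pow_lt_pow_right (by norm_num) (by omega)
      omega
    have : y = c := hcu y ⟨hy1, hy2⟩
    rw [← this]
    exact H.pow_mem hxH _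
  -- the inversion map on T
  let f : Function.End T := fun t => ⟨(t : G)⁻¹, hTinvMem _ t.2⟩
  have hf2 : f ^ 2 ^ 1 = 1 := by
    funext t; show f (f t) = t; simp [f]
  have hmod := Equiv.Perm.card_fixedPoints_modEq (p := 2) (n := 1) hf2
  -- fixed points of f = {t₀}
  have hfixcard : Fintype.card f.fixedPoints = 1 := by
    rw [Fintype.card_eq_one_iff]
    refine ⟨⟨⟨(t₀ : G), ht₀T⟩, Subtype.ext ht₀fix⟩, ?_⟩
    rintro ⟨⟨t, htT⟩, hfix⟩
    have htinv : t⁻¹ = t := congrArg Subtype.val hfix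
    have ht2 : t ^ 2 = 1 := by
      rw [pow_two, mul_eq_one_iff_eq_inv]; exact htinv.symm
    have htH : t ∈ H := by
      rcases eq_or_ne t 1 with rfl | ht1
      · exact H.one_mem
      · rw [hcu t ⟨ht1, ht2⟩]; exact hcH
    exact Subtype.ext (Subtype.ext (huniqTH t t₀ htT htH ht₀T ht₀H))
  -- |T| is even
  have hcardT : 2 ∣ Fintype.card T := by
    obtain ⟨n, hn⟩ := IsPGroup.iff_card.mp h2
    have hdvd : Nat.card T ∣ 2 ^ n :=
      ⟨Nat.card H, by rw [← hn, ← hc.card_mul_card]; exact mul_comm _ _⟩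
    obtain ⟨k, hk, hTk⟩ := (Nat.dvd_prime_pow Nat.prime_two).mp hdvd
    have hk0 : k ≠ 0 := by
      rintro rfl
      apply htop
      refine Subgroup.eq_top_of_card_eq H ?_
      have := hc.card_mul_card
      rw [hTk] at this
      simpa using this
    rw [← Nat.card_eq_fintype_card, hTk]
    exact dvd_pow_self 2 hk0
  rw [hfixcard] at hmod
  unfold Nat.ModEq at hmod
  omega
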